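/- Let a₂, a₃, b₁, b₂, b₃ be positive integers. If (1 − X^{b₁+b₂})(1 − X^{a₂})(1 − X^{a₃}) = (1 − X^{b₁})(1 − X^{b₂})(1 − X^{b₃}) in the polynomial ring ℤ[X], then the multiset {a₂, a₃} equals the multiset {b₁, b₂}, and b₃ = a₂ + a₃. -/
import Mathlib
open Polynomial

lemma xp_ne (a : ℕ) (ha : 0 < a) : (1 - (X:ℤ[X])^a) ≠ 0 := by
  intro hz
  have := congrArg (fun p => Polynomial.coeff p a) hz
  simp [coeff_X_pow, coeff_one, ha.ne'] at this

lemma nd (a : ℕ) (ha : 0 < a) : (1 - (X:ℤ[X])^a).natDegree = a := by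
  rw [Polynomial.natDegree_sub_eq_right_of_natDegree_lt] <;>
    simp [natDegree_X_pow, ha]

-- sorted 2-factor lemma
lemma L2s (p q r s : ℕ) (hp : 0 < p) (hq : 0 < q) (hr : 0 < r) (hs : 0 < s)
    (hpq : p ≤ q) (hrs : r ≤ s)
    (h : (1-(X:ℤ[X])^p)*(1-X^q) = (1-X^r)*(1-X^s)) : p = r ∧ q = s := by
  have h' : (1:ℤ[X]) - X^p - X^q + X^(p+q) = 1 - X^r - X^s + X^(r+s) := by
    linear_combination h
  set m := min p r with hm
  have hmp : m ≤ p := min_le_left _ _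
  have hmr : m ≤ r := min_le_right _ _
  have hor : m = p ∨ m = r := min_choice p r
  have h0 : 0 < m := lt_min hp hr
  have hc := congrArg (fun f => Polynomial.coeff f m) h'
  simp only [coeff_add, coeff_sub, coeff_one, coeff_X_pow] at hc
  rw [if_neg h0.ne', if_neg (by omega : ¬ m = p + q), if_neg (by omega : ¬ m = r + s)] at hc
  have hpr : p = r := by split_ifs at hc <;> omega
  refine ⟨hpr, ?_⟩
  have hcan : (1-(X:ℤ[X])^p) * (1-X^q) = (1-(X:ℤ[X])^p) * (1-X^s) := by
    rw [h]; rw [hpr]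
  have := mul_left_cancel₀ (xp_ne p hp) hcan
  have hxx : (X:ℤ[X])^q = X^s := by linear_combination -this
  have := congrArg (fun f => Polynomial.coeff f q) hxx
  simp only [coeff_X_pow] at this
  split_ifs at this <;> omega

lemma L2 (p q r s : ℕ) (hp : 0 < p) (hq : 0 < q) (hr : 0 < r) (hs : 0 < s)
    (h : (1-(X:ℤ[X])^p)*(1-X^q) = (1-X^r)*(1-X^s)) :
    (p = r ∧ q = s) ∨ (p = s ∧ q = r) := by
  rcases le_total p q with h1 | h1 <;> rcases le_total r s with h2 | h2
  · exact .inl (L2s p q r s hp hq hr hs h1 h2 h)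
  · exact .inr (L2s p q s r hp hq hs hr h1 h2 (by linear_combination h))
  · obtain ⟨e1, e2⟩ := L2s q p r s hq hp hr hs h1 h2 (by linear_combination h)
    exact .inr ⟨e2, e1⟩
  · obtain ⟨e1, e2⟩ := L2s q p s r hq hp hs hr h1 h2 (by linear_combination h)
    exact .inl ⟨e2, e1⟩

-- sorted key lemma
lemma key (a₂ a₃ b₁ b₂ b₃ : ℕ)
    (ha₂ : 0 < a₂) (ha₃ : 0 < a₃) (hb₁ : 0 < b₁) (hb₂ : 0 < b₂) (hb₃ : 0 < b₃)
    (haa : a₂ ≤ a₃) (hbb : b₁ ≤ b₂)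
    (h : (1 - (X : ℤ[X]) ^ (b₁ + b₂)) * (1 - (X : ℤ[X]) ^ a₂) *
           (1 - (X : ℤ[X]) ^ a₃) =
         (1 - (X : ℤ[X]) ^ b₁) * (1 - (X : ℤ[X]) ^ b₂) *
           (1 - (X : ℤ[X]) ^ b₃)) :
    a₂ = b₁ ∧ a₃ = b₂ ∧ b₃ = a₂ + a₃ := by
  -- step 1: degrees give b₃ = a₂ + a₃
  have hdeg : b₁ + b₂ + a₂ + a₃ = b₁ + b₂ + b₃ := by
    have hL := congrArg Polynomial.natDegree h
    rw [natDegree_mul (mul_ne_zero (xp_ne _ (by omega)) (xp_ne _ ha₂)) (xp_ne _ ha₃),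
        natDegree_mul (xp_ne _ (by omega)) (xp_ne _ ha₂),
        natDegree_mul (mul_ne_zero (xp_ne _ hb₁) (xp_ne _ hb₂)) (xp_ne _ hb₃),
        natDegree_mul (xp_ne _ hb₁) (xp_ne _ hb₂),
        nd _ (by omega : 0 < b₁ + b₂), nd _ ha₂, nd _ ha₃, nd _ hb₁, nd _ hb₂, nd _ hb₃] at hL
    omega
  have hb3 : b₃ = a₂ + a₃ := by omega
  -- step 2: coefficient at min a₂ b₁ gives a₂ = b₁
  have h' : (1:ℤ[X]) - X^(b₁+b₂) - X^a₂ - X^a₃ + X^(b₁+b₂+a₂) + X^(b₁+b₂+a₃)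
      + X^(a₂+a₃) - X^(b₁+b₂+a₂+a₃)
      = 1 - X^b₁ - X^b₂ - X^b₃ + X^(b₁+b₂) + X^(b₁+b₃) + X^(b₂+b₃) - X^(b₁+b₂+b₃) := by
    linear_combination h
  set m := min a₂ b₁ with hm
  have hma : m ≤ a₂ := min_le_left _ _
  have hmb : m ≤ b₁ := min_le_right _ _
  have hor : m = a₂ ∨ m = b₁ := min_choice a₂ b₁
  have h0 : 0 < m := lt_min ha₂ hb₁
  have hc := congrArg (fun f => Polynomial.coeff f m) h'
  simp only [coeff_add, coeff_sub, coeff_one, coeff_X_pow] at hc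
  rw [if_neg h0.ne', if_neg (by omega : ¬ m = b₁+b₂), if_neg (by omega : ¬ m = b₁+b₂+a₂),
      if_neg (by omega : ¬ m = b₁+b₂+a₃), if_neg (by omega : ¬ m = a₂+a₃),
      if_neg (by omega : ¬ m = b₁+b₂+a₂+a₃), if_neg (by omega : ¬ m = b₃), if_neg (by omega : ¬ m = b₁+b₃),
      if_neg (by omega : ¬ m = b₂+b₃), if_neg (by omega : ¬ m = b₁+b₂+b₃)] at hc
  have hab : a₂ = b₁ := by split_ifs at hc <;> omega
  -- step 3: cancel (1 - X^a₂)
  have hcan : (1-(X:ℤ[X])^a₂) * ((1-X^(b₁+b₂)) * (1-X^a₃))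
      = (1-(X:ℤ[X])^a₂) * ((1-X^b₂) * (1-X^b₃)) := by
    rw [show (1-(X:ℤ[X])^a₂) * ((1-X^(b₁+b₂)) * (1-X^a₃))
        = (1 - X ^ (b₁ + b₂)) * (1 - X ^ a₂) * (1 - X ^ a₃) by ring, h, hab]
    ring
  have h2 := mul_left_cancel₀ (xp_ne _ ha₂) hcan
  rcases L2 _ _ _ _ (by omega) ha₃ hb₂ hb₃ h2 with ⟨e1, e2⟩ | ⟨e1, e2⟩
  · omega
  · omega

theorem stmt_6 (a₂ a₃ b₁ b₂ b₃ : ℕ)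
    (ha₂ : 0 < a₂) (ha₃ : 0 < a₃) (hb₁ : 0 < b₁) (hb₂ : 0 < b₂) (hb₃ : 0 < b₃)
    (h : (1 - (X : ℤ[X]) ^ (b₁ + b₂)) * (1 - (X : ℤ[X]) ^ a₂) *
           (1 - (X : ℤ[X]) ^ a₃) =
         (1 - (X : ℤ[X]) ^ b₁) * (1 - (X : ℤ[X]) ^ b₂) *
           (1 - (X : ℤ[X]) ^ b₃)) :
    ({a₂, a₃} : Multiset ℕ) = {b₁, b₂} ∧ b₃ = a₂ + a₃ := by
  have pair_comm : ∀ x y : ℕ, ({x, y} : Multiset ℕ) = {y, x} := fun x y =>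
    Multiset.cons_swap x y 0
  rcases le_total a₂ a₃ with h1 | h1 <;> rcases le_total b₁ b₂ with h2 | h2
  · obtain ⟨e1, e2, e3⟩ := key a₂ a₃ b₁ b₂ b₃ ha₂ ha₃ hb₁ hb₂ hb₃ h1 h2 h
    exact ⟨by rw [e1, e2], e3⟩
  · obtain ⟨e1, e2, e3⟩ := key a₂ a₃ b₂ b₁ b₃ ha₂ ha₃ hb₂ hb₁ hb₃ h1 h2
      (by linear_combination h)
    exact ⟨by rw [e1, e2, pair_comm], by omega⟩
  · obtain ⟨e1, e2, e3⟩ := key a₃ a₂ b₁ b₂ b₃ ha₃ ha₂ hb₁ hb₂ hb₃ h1 h2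
      (by linear_combination h)
    exact ⟨by rw [pair_comm, e1, e2], by omega⟩
  · obtain ⟨e1, e2, e3⟩ := key a₃ a₂ b₂ b₁ b₃ ha₃ ha₂ hb₂ hb₁ hb₃ h1 h2
      (by linear_combination h)
    exact ⟨by rw [pair_comm, e1, e2, pair_comm], by omega⟩
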